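/- Let W₁^{h}(q,p) = (1/(πh))·(2(q²+p²)/h − 1)·e^{−(q²+p²)/h} denote the Wigner function of the first excited oscillator state for Planck constant h > 0, and W₀^{h'}(q,p) = (1/(πh'))·e^{−(q²+p²)/h'} the ground-state Wigner function for Planck constant h' > 0. If h' < h then ∫∫_{ℝ²} W₁^{h}(q,p)·W₀^{h'}(q,p) dq dp < 0. -/

import Mathlib

open Real MeasureTheory

/-- Wigner function of the first excited oscillator state at Planck constant `h`. -/
noncomputable def W1h (h q p : ℝ) : ℝ :=
  (1 / (π * h)) * (2 * (q ^ 2 + p ^ 2) / h - 1) * Real.exp (-(q ^ 2 + p ^ 2) / h)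

/-- Ground-state Wigner function at Planck constant `h'`. -/
noncomputable def W0h (h' q p : ℝ) : ℝ :=
  (1 / (π * h')) * Real.exp (-(q ^ 2 + p ^ 2) / h')

lemma integrable_sq_gaussian {b : ℝ} (hb : 0 < b) :
    Integrable (fun x : ℝ => x ^ 2 * Real.exp (-b * x ^ 2)) := by
  have := integrable_rpow_mul_exp_neg_mul_sq hb (s := 2) (by norm_num)
  simpa [Real.rpow_two] using this

lemma integral_sq_gaussian {b : ℝ} (hb : 0 < b) :
    ∫ x : ℝ, x ^ 2 * Real.exp (-b * x ^ 2) = 1 / (2 * b) * Real.sqrt (π / b) := by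
  have hd : ∀ x : ℝ, HasDerivAt (fun x : ℝ => x * Real.exp (-b * x ^ 2))
      (Real.exp (-b * x ^ 2) - 2 * b * (x ^ 2 * Real.exp (-b * x ^ 2))) x := by
    intro x
    have h1 : HasDerivAt (fun x : ℝ => -b * x ^ 2) (-b * (2 * x)) x := by
      simpa using (hasDerivAt_pow 2 x).const_mul (-b)
    have h3 := (hasDerivAt_id x).mul h1.exp
    exact h3.congr_deriv (by simp only [id_eq]; ring)
  have hint0 := integrable_exp_neg_mul_sq hb
  have hint2 := integrable_sq_gaussian hb
  have hf' : Integrable (fun x : ℝ =>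
      Real.exp (-b * x ^ 2) - 2 * b * (x ^ 2 * Real.exp (-b * x ^ 2))) :=
    hint0.sub (hint2.const_mul (2 * b))
  have hzero := integral_eq_zero_of_hasDerivAt_of_integrable hd hf'
    (integrable_mul_exp_neg_mul_sq hb)
  rw [integral_sub hint0 (hint2.const_mul (2 * b)), integral_const_mul,
    integral_gaussian] at hzero
  have hb' : (2 : ℝ) * b ≠ 0 := by positivity
  field_simp at hzero ⊢
  linarith

theorem two_plancks_overlap_negative (h h' : ℝ) (hh : 0 < h) (hh' : 0 < h') (hlt : h' < h) :
    (∫ x : ℝ × ℝ, W1h h x.1 x.2 * W0h h' x.1 x.2) < 0 := by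
  set a : ℝ := 1 / h + 1 / h' with ha_def
  have ha : 0 < a := by positivity
  set C : ℝ := 1 / (π * h) * (1 / (π * h')) with hC_def
  have hC : 0 < C := by
    have := pi_pos
    positivity
  set I0 : ℝ := Real.sqrt (π / a) with hI0_def
  set I2 : ℝ := 1 / (2 * a) * Real.sqrt (π / a) with hI2_def
  have key : ∀ q p : ℝ, W1h h q p * W0h h' q p =
      C * ((2 / h) * ((q ^ 2 * Real.exp (-a * q ^ 2)) * Real.exp (-a * p ^ 2)) +
        (2 / h) * (Real.exp (-a * q ^ 2) * (p ^ 2 * Real.exp (-a * p ^ 2))) -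
        Real.exp (-a * q ^ 2) * Real.exp (-a * p ^ 2)) := by
    intro q p
    unfold W1h W0h
    have hexp : Real.exp (-(q ^ 2 + p ^ 2) / h) * Real.exp (-(q ^ 2 + p ^ 2) / h') =
        Real.exp (-a * q ^ 2) * Real.exp (-a * p ^ 2) := by
      rw [← Real.exp_add, ← Real.exp_add]
      congr 1
      rw [ha_def]
      field_simp
      ring
    calc (1 / (π * h)) * (2 * (q ^ 2 + p ^ 2) / h - 1) * Real.exp (-(q ^ 2 + p ^ 2) / h) *
          ((1 / (π * h')) * Real.exp (-(q ^ 2 + p ^ 2) / h'))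
        = (1 / (π * h)) * (2 * (q ^ 2 + p ^ 2) / h - 1) * (1 / (π * h')) *
          (Real.exp (-(q ^ 2 + p ^ 2) / h) * Real.exp (-(q ^ 2 + p ^ 2) / h')) := by ring
      _ = (1 / (π * h)) * (2 * (q ^ 2 + p ^ 2) / h - 1) * (1 / (π * h')) *
          (Real.exp (-a * q ^ 2) * Real.exp (-a * p ^ 2)) := by rw [hexp]
      _ = _ := by rw [hC_def]; ring
  have int0 : Integrable (fun x : ℝ => Real.exp (-a * x ^ 2)) := integrable_exp_neg_mul_sq ha
  have int2 : Integrable (fun x : ℝ => x ^ 2 * Real.exp (-a * x ^ 2)) := integrable_sq_gaussian ha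
  have i20 : Integrable (fun z : ℝ × ℝ =>
      (z.1 ^ 2 * Real.exp (-a * z.1 ^ 2)) * Real.exp (-a * z.2 ^ 2))
      ((volume : Measure ℝ).prod volume) := int2.mul_prod int0
  have i02 : Integrable (fun z : ℝ × ℝ =>
      Real.exp (-a * z.1 ^ 2) * (z.2 ^ 2 * Real.exp (-a * z.2 ^ 2)))
      ((volume : Measure ℝ).prod volume) := int0.mul_prod int2
  have i00 : Integrable (fun z : ℝ × ℝ =>
      Real.exp (-a * z.1 ^ 2) * Real.exp (-a * z.2 ^ 2))
      ((volume : Measure ℝ).prod volume) := int0.mul_prod int0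
  have hI0val : ∫ x : ℝ, Real.exp (-a * x ^ 2) = I0 := integral_gaussian a
  have hI2val : ∫ x : ℝ, x ^ 2 * Real.exp (-a * x ^ 2) = I2 := integral_sq_gaussian ha
  have hval : (∫ x : ℝ × ℝ, W1h h x.1 x.2 * W0h h' x.1 x.2) =
      C * ((2 / h) * (I2 * I0) + (2 / h) * (I0 * I2) - I0 * I0) := by
    have hrw : (∫ x : ℝ × ℝ, W1h h x.1 x.2 * W0h h' x.1 x.2) =
        ∫ z : ℝ × ℝ, C * ((2 / h) * ((z.1 ^ 2 * Real.exp (-a * z.1 ^ 2)) *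
          Real.exp (-a * z.2 ^ 2)) +
          (2 / h) * (Real.exp (-a * z.1 ^ 2) * (z.2 ^ 2 * Real.exp (-a * z.2 ^ 2))) -
          Real.exp (-a * z.1 ^ 2) * Real.exp (-a * z.2 ^ 2)) ∂((volume : Measure ℝ).prod volume)
        := by
      rw [← Measure.volume_eq_prod]
      exact integral_congr_ae (Filter.Eventually.of_forall fun z => key z.1 z.2)
    have iA : Integrable (fun z : ℝ × ℝ =>
        (2 / h) * ((z.1 ^ 2 * Real.exp (-a * z.1 ^ 2)) * Real.exp (-a * z.2 ^ 2)))
        ((volume : Measure ℝ).prod volume) := i20.const_mul _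
    have iB : Integrable (fun z : ℝ × ℝ =>
        (2 / h) * (Real.exp (-a * z.1 ^ 2) * (z.2 ^ 2 * Real.exp (-a * z.2 ^ 2))))
        ((volume : Measure ℝ).prod volume) := i02.const_mul _
    have iAB : Integrable (fun z : ℝ × ℝ =>
        (2 / h) * ((z.1 ^ 2 * Real.exp (-a * z.1 ^ 2)) * Real.exp (-a * z.2 ^ 2)) +
        (2 / h) * (Real.exp (-a * z.1 ^ 2) * (z.2 ^ 2 * Real.exp (-a * z.2 ^ 2))))
        ((volume : Measure ℝ).prod volume) := iA.add iB
    rw [hrw, integral_const_mul]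
    congr 1
    rw [integral_sub iAB i00,
      integral_add iA iB,
      integral_const_mul, integral_const_mul,
      integral_prod_mul (fun q : ℝ => q ^ 2 * Real.exp (-a * q ^ 2))
        (fun p : ℝ => Real.exp (-a * p ^ 2)),
      integral_prod_mul (fun q : ℝ => Real.exp (-a * q ^ 2))
        (fun p : ℝ => p ^ 2 * Real.exp (-a * p ^ 2)),
      integral_prod_mul (fun q : ℝ => Real.exp (-a * q ^ 2))
        (fun p : ℝ => Real.exp (-a * p ^ 2)),
      hI0val, hI2val]
  rw [hval]
  have hI0sq : I0 * I0 = π / a := Real.mul_self_sqrt (by positivity)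
  have hfac : (2 / h) * (I2 * I0) + (2 / h) * (I0 * I2) - I0 * I0 =
      (I0 * I0) * (2 / (a * h) - 1) := by
    rw [hI2_def, ← hI0_def]
    field_simp
    ring
  rw [hfac, hI0sq]
  have hbr : 2 / (a * h) - 1 < 0 := by
    have hah : 1 + h / h' = a * h := by rw [ha_def]; field_simp
    have h2 : 2 < a * h := by
      rw [← hah]
      have : 1 < h / h' := (one_lt_div hh').mpr hlt
      linarith
    have : 2 / (a * h) < 1 := (div_lt_one (by linarith)).mpr h2
    linarith
  have hpa : 0 < π / a := by have := pi_pos; positivity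
  calc C * (π / a * (2 / (a * h) - 1)) < C * 0 := by
        apply mul_lt_mul_of_pos_left _ hC
        exact mul_neg_of_pos_of_neg hpa hbr
    _ = 0 := by ring
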